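/- Let α > 1, let p be a probability vector on Fin m, let ρ_1, …, ρ_m be density matrices on ℂ^d, and let σ be a positive definite density matrix on ℂ^d. Set ζ := (Σ_x p_x ρ_x^α)^{1/α} and μ := ζ / tr(ζ). Then (1/(α−1)) · log₂ tr((Σ_x p_x ρ_x^α) σ^{1−α}) = (α/(α−1)) · log₂ tr(ζ) + (1/(α−1)) · log₂ tr(μ^α σ^{1−α}). (Equivalently: D_α(ρ_{XQ}‖ρ_X ⊗ σ) = D_α(ρ_{XQ}‖ρ_X ⊗ μ) + D_α(μ‖σ) for the cq-state ρ_{XQ} associated with the ensemble {p_x, ρ_x}.) -/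

import Mathlib

open Matrix ComplexOrder

/-- Matrix power via functional calculus on eigenvalues, with the convention `0 ^ β = 0`
(matrices that are not Hermitian are sent to `0`). -/
noncomputable def mpow {d : ℕ} (A : Matrix (Fin d) (Fin d) ℂ) (β : ℝ) :
    Matrix (Fin d) (Fin d) ℂ :=
  if hA : A.IsHermitian then
    (hA.eigenvectorUnitary : Matrix (Fin d) (Fin d) ℂ) *
      Matrix.diagonal (fun i =>
        ((if hA.eigenvalues i = 0 then (0 : ℝ) else hA.eigenvalues i ^ β : ℝ) : ℂ)) *
      star (hA.eigenvectorUnitary : Matrix (Fin d) (Fin d) ℂ)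
  else 0

lemma continuousOn_of_finite {s : Set ℝ} (hs : s.Finite) (g : ℝ → ℝ) :
    ContinuousOn g s := by
  rw [continuousOn_iff_continuous_restrict]
  have : Finite s := hs.to_subtype
  exact continuous_of_discreteTopology

lemma mpow_eq_cfc {d : ℕ} {A : Matrix (Fin d) (Fin d) ℂ} (hA : A.IsHermitian) (β : ℝ) :
    mpow A β = cfc (fun x : ℝ => if x = 0 then (0:ℝ) else x ^ β) A := by
  rw [hA.cfc_eq, mpow, dif_pos hA, Matrix.IsHermitian.cfc]
  rfl

lemma posDef_unitary_conj {d : ℕ} {D U : Matrix (Fin d) (Fin d) ℂ} (hD : D.PosDef)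
    (hU : U ∈ unitary (Matrix (Fin d) (Fin d) ℂ)) : (U * D * star U).PosDef := by
  have h1 : U * D * star U = (star U)ᴴ * D * (star U) := by
    rw [Matrix.star_eq_conjTranspose, Matrix.conjTranspose_conjTranspose]
  rw [h1]
  refine posDef_iff_dotProduct_mulVec.mpr ⟨Matrix.isHermitian_conjTranspose_mul_mul _ hD.1, fun x hx => ?_⟩
  have hx' : star U *ᵥ x ≠ 0 := by
    intro h
    apply hx
    have h2 := congrArg (U *ᵥ ·) h
    simpa [Matrix.mulVec_mulVec, Unitary.mul_star_self_of_mem hU] using h2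
  simpa only [star_mulVec, dotProduct_mulVec, vecMul_vecMul] using hD.dotProduct_mulVec_pos hx'

lemma mpow_posSemidef {d : ℕ} {A : Matrix (Fin d) (Fin d) ℂ} (hA : A.PosSemidef) (β : ℝ) :
    (mpow A β).PosSemidef := by
  rw [mpow, dif_pos hA.1, Matrix.star_eq_conjTranspose]
  refine (Matrix.posSemidef_diagonal_iff.mpr fun i => ?_).mul_mul_conjTranspose_same _
  split_ifs with h
  · simp
  · exact Complex.zero_le_real.mpr (Real.rpow_nonneg (hA.eigenvalues_nonneg i) β)

lemma mpow_posDef {d : ℕ} {A : Matrix (Fin d) (Fin d) ℂ} (hA : A.PosDef) (β : ℝ) :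
    (mpow A β).PosDef := by
  rw [mpow, dif_pos hA.1]
  refine posDef_unitary_conj (Matrix.posDef_diagonal_iff.mpr fun i => ?_) (SetLike.coe_mem _)
  have h := hA.eigenvalues_pos i
  rw [if_neg h.ne']
  exact Complex.zero_lt_real.mpr (Real.rpow_pos_of_pos h β)

lemma spectrum_nonneg_of_posSemidef {d : ℕ} {A : Matrix (Fin d) (Fin d) ℂ}
    (hA : A.PosSemidef) {x : ℝ} (hx : x ∈ spectrum ℝ A) : 0 ≤ x := by
  rw [hA.1.spectrum_real_eq_range_eigenvalues] at hx
  obtain ⟨i, rfl⟩ := hx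
  exact hA.eigenvalues_nonneg i

lemma spectrum_pos_of_posDef {d : ℕ} {A : Matrix (Fin d) (Fin d) ℂ}
    (hA : A.PosDef) {x : ℝ} (hx : x ∈ spectrum ℝ A) : 0 < x := by
  rw [hA.1.spectrum_real_eq_range_eigenvalues] at hx
  obtain ⟨i, rfl⟩ := hx
  exact hA.eigenvalues_pos i

lemma mpow_mpow_inv {d : ℕ} {S : Matrix (Fin d) (Fin d) ℂ} (hS : S.PosSemidef)
    {α : ℝ} (hα : α ≠ 0) : mpow (mpow S (1/α)) α = S := by
  have hsa : IsSelfAdjoint S := hS.1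
  rw [mpow_eq_cfc (mpow_posSemidef hS (1/α)).1, mpow_eq_cfc hS.1,
    ← cfc_comp _ _ S hsa
      (continuousOn_of_finite ((Matrix.finite_real_spectrum (A := S)).image _) _)
      (continuousOn_of_finite (Matrix.finite_real_spectrum (A := S)) _)]
  have heq : (spectrum ℝ S).EqOn
      ((fun x : ℝ => if x = 0 then (0:ℝ) else x ^ α) ∘
        (fun x : ℝ => if x = 0 then (0:ℝ) else x ^ (1/α))) id := by
    intro x hx
    have hx0 := spectrum_nonneg_of_posSemidef hS hx
    rcases eq_or_lt_of_le hx0 with h | h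
    · simp [Function.comp, ← h]
    · have h1 : x ^ (1/α) ≠ 0 := (Real.rpow_pos_of_pos h _).ne'
      simp only [Function.comp, if_neg h.ne', if_neg h1, id_eq]
      rw [← Real.rpow_mul hx0, one_div, inv_mul_cancel₀ hα, Real.rpow_one]
  rw [cfc_congr heq, cfc_id ℝ S hsa]

lemma isHermitian_real_smul {d : ℕ} {ζ : Matrix (Fin d) (Fin d) ℂ} (hζ : ζ.IsHermitian)
    (r : ℝ) : (r • ζ).IsHermitian := by
  have : (r • ζ)ᴴ = r • ζᴴ := by
    ext i j
    simp [Matrix.conjTranspose_apply, Complex.real_smul]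
  rw [Matrix.IsHermitian, this, hζ.eq]

lemma mpow_real_smul {d : ℕ} {ζ : Matrix (Fin d) (Fin d) ℂ} (hζ : ζ.PosSemidef)
    {r : ℝ} (hr : 0 < r) (β : ℝ) :
    mpow (r • ζ) β = (r ^ β : ℝ) • mpow ζ β := by
  have hsa : IsSelfAdjoint ζ := hζ.1
  rw [mpow_eq_cfc (isHermitian_real_smul hζ.1 r) β,
    ← cfc_comp_smul r _ ζ (continuousOn_of_finite
      (((Matrix.finite_real_spectrum (A := ζ))).image _) _) hsa,
    mpow_eq_cfc hζ.1, ← cfc_const_mul (r ^ β) _ ζ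
      (continuousOn_of_finite (Matrix.finite_real_spectrum (A := ζ)) _)]
  apply cfc_congr
  intro x hx
  have hx0 := spectrum_nonneg_of_posSemidef hζ hx
  dsimp only [smul_eq_mul]
  rcases eq_or_lt_of_le hx0 with h | h
  · simp [← h]
  · rw [if_neg h.ne', if_neg (by positivity), Real.mul_rpow hr.le hx0]

lemma mpow_half_mul {d : ℕ} {σ : Matrix (Fin d) (Fin d) ℂ} (hσ : σ.PosDef) (γ : ℝ) :
    mpow σ (γ/2) * mpow σ (γ/2) = mpow σ γ := by
  rw [mpow_eq_cfc hσ.1, mpow_eq_cfc hσ.1,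
    ← cfc_mul _ _ σ (continuousOn_of_finite (Matrix.finite_real_spectrum (A := σ)) _)
      (continuousOn_of_finite (Matrix.finite_real_spectrum (A := σ)) _)]
  apply cfc_congr
  intro x hx
  have h := spectrum_pos_of_posDef hσ hx
  simp only [if_neg h.ne']
  rw [← Real.rpow_add h, add_halves]

lemma posSemidef_ofReal_smul {d : ℕ} {M : Matrix (Fin d) (Fin d) ℂ} (hM : M.PosSemidef)
    {c : ℝ} (hc : 0 ≤ c) : ((c : ℂ) • M).PosSemidef := by
  rw [posSemidef_iff_dotProduct_mulVec]
  constructor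
  · show _ = _
    rw [Matrix.conjTranspose_smul]
    simp [hM.1.eq]
  · intro x
    rw [Matrix.smul_mulVec, dotProduct_smul]
    exact smul_nonneg (Complex.zero_le_real.mpr hc) (hM.dotProduct_mulVec_nonneg x)

lemma trace_unitary_conj {d : ℕ} (U : unitary (Matrix (Fin d) (Fin d) ℂ))
    (D : Matrix (Fin d) (Fin d) ℂ) :
    ((U : Matrix (Fin d) (Fin d) ℂ) * D * star (U : Matrix (Fin d) (Fin d) ℂ)).trace
      = D.trace := by
  rw [Matrix.trace_mul_cycle]
  simp [Unitary.star_mul_self_of_mem (SetLike.coe_mem U), ← Matrix.mul_assoc]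

lemma trace_eq_sum_eig {d : ℕ} {A : Matrix (Fin d) (Fin d) ℂ} (hA : A.IsHermitian) :
    A.trace = ((∑ i, hA.eigenvalues i : ℝ) : ℂ) := by
  conv_lhs => rw [hA.spectral_theorem]
  rw [Unitary.conjStarAlgAut_apply, trace_unitary_conj, Matrix.trace_diagonal]
  push_cast
  rfl

lemma mpow_trace {d : ℕ} {A : Matrix (Fin d) (Fin d) ℂ} (hA : A.IsHermitian) (β : ℝ) :
    (mpow A β).trace
      = ((∑ i, if hA.eigenvalues i = 0 then (0:ℝ) else hA.eigenvalues i ^ β : ℝ) : ℂ) := by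
  rw [mpow, dif_pos hA, trace_unitary_conj, Matrix.trace_diagonal]
  push_cast
  rfl

lemma posSemidef_eq_zero_of_trace_eq_zero {d : ℕ} {M : Matrix (Fin d) (Fin d) ℂ}
    (hM : M.PosSemidef) (h : M.trace = 0) : M = 0 := by
  have ht := trace_eq_sum_eig hM.1
  rw [h] at ht
  have hsum : ∑ i, hM.1.eigenvalues i = 0 := by exact_mod_cast ht.symm
  have hall := (Finset.sum_eq_zero_iff_of_nonneg
    (fun i _ => hM.eigenvalues_nonneg i)).mp hsum
  have hdiag : Matrix.diagonal (RCLike.ofReal ∘ hM.1.eigenvalues)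
      = (0 : Matrix (Fin d) (Fin d) ℂ) := by
    rw [show (RCLike.ofReal ∘ hM.1.eigenvalues : Fin d → ℂ) = (fun _ => 0) from
      funext fun i => by simp [hall i (Finset.mem_univ i)], Matrix.diagonal_zero]
  rw [hM.1.spectral_theorem, hdiag, map_zero]

lemma trace_mul_mpow_pos {d : ℕ} {S σ : Matrix (Fin d) (Fin d) ℂ}
    (hS : S.PosSemidef) (hStr : S.trace ≠ 0) (hσ : σ.PosDef) (γ : ℝ) :
    ∃ c : ℝ, 0 < c ∧ (S * mpow σ γ).trace = (c : ℂ) := by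
  set V := mpow σ (γ/2) with hVdef
  have hV := mpow_posDef hσ (γ/2)
  have hM : (V * S * V).PosSemidef := by
    have := hS.conjTranspose_mul_mul_same V
    rwa [hV.1.eq] at this
  have htr : (S * mpow σ γ).trace = (V * S * V).trace := by
    rw [← mpow_half_mul hσ γ, ← Matrix.mul_assoc, Matrix.trace_mul_cycle]
  refine ⟨∑ i, hM.1.eigenvalues i, ?_, by rw [htr]; exact trace_eq_sum_eig hM.1⟩
  have hnn : 0 ≤ ∑ i, hM.1.eigenvalues i :=
    Finset.sum_nonneg fun i _ => hM.eigenvalues_nonneg i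
  refine lt_of_le_of_ne hnn (Ne.symm fun h0 => ?_)
  have h1 : (V * S * V).trace = 0 := by
    rw [trace_eq_sum_eig hM.1, h0, Complex.ofReal_zero]
  have h2 := posSemidef_eq_zero_of_trace_eq_zero hM h1
  have hdet : IsUnit V.det := isUnit_iff_ne_zero.mpr hV.det_pos.ne'
  have h4 : V⁻¹ * (V * S * V) * V⁻¹ = S := by
    rw [Matrix.mul_assoc V S V, Matrix.nonsing_inv_mul_cancel_left V _ hdet,
      Matrix.mul_nonsing_inv_cancel_right V S hdet]
  rw [h2, mul_zero, zero_mul] at h4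
  exact hStr (by rw [← h4, Matrix.trace_zero])

/-- **Decomposition of the relative `α`-entropy of a cq-state.**
With `ζ = (∑ x, p x • ρ x ^ α)^(1/α)` and `μ = ζ / tr ζ`:
`D_α(ρ_{XQ}‖ρ_X ⊗ σ) = D_α(ρ_{XQ}‖ρ_X ⊗ μ) + D_α(μ‖σ)`, i.e.
`(1/(α−1)) log₂ tr((∑ x, p x • ρ x^α) σ^{1−α})
  = (α/(α−1)) log₂ tr ζ + (1/(α−1)) log₂ tr(μ^α σ^{1−α})`. -/
theorem renyi_relative_entropy_cq_decomposition
    (d m : ℕ) (α : ℝ) (hα : 1 < α)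
    (p : Fin m → ℝ) (hp_nonneg : ∀ x, 0 ≤ p x) (hp_sum : ∑ x, p x = 1)
    (ρ : Fin m → Matrix (Fin d) (Fin d) ℂ)
    (hρ_psd : ∀ x, (ρ x).PosSemidef) (hρ_tr : ∀ x, (ρ x).trace = 1)
    (σ : Matrix (Fin d) (Fin d) ℂ) (hσ_pd : σ.PosDef) (hσ_tr : σ.trace = 1)
    (ζ μ : Matrix (Fin d) (Fin d) ℂ)
    (hζ : ζ = mpow (∑ x, (p x : ℂ) • mpow (ρ x) α) (1 / α))
    (hμ : μ = (ζ.trace)⁻¹ • ζ) :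
    (1 / (α - 1)) *
        Real.logb 2 (((∑ x, (p x : ℂ) • mpow (ρ x) α) * mpow σ (1 - α)).trace).re =
      (α / (α - 1)) * Real.logb 2 ((ζ.trace).re) +
        (1 / (α - 1)) * Real.logb 2 ((mpow μ α * mpow σ (1 - α)).trace).re := by
  have hα0 : (0:ℝ) < α := lt_trans one_pos hα
  set S := ∑ x, (p x : ℂ) • mpow (ρ x) α with hSdef
  have hS_psd : S.PosSemidef := by
    rw [hSdef]
    exact Finset.sum_induction _ _ (fun a b ha hb => ha.add hb) Matrix.PosSemidef.zero
      (fun x _ => posSemidef_ofReal_smul (mpow_posSemidef (hρ_psd x) α) (hp_nonneg x))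
  -- positivity of the traces of mpow (ρ x) α
  have hc_pos : ∀ x, 0 < ∑ i,
      if (hρ_psd x).1.eigenvalues i = 0 then (0:ℝ)
      else (hρ_psd x).1.eigenvalues i ^ α := by
    intro x
    obtain ⟨j, hj⟩ : ∃ j, 0 < (hρ_psd x).1.eigenvalues j := by
      by_contra h
      push_neg at h
      have h2 : ∑ i, (hρ_psd x).1.eigenvalues i = 0 :=
        le_antisymm (Finset.sum_nonpos fun i _ => h i)
          (Finset.sum_nonneg fun i _ => (hρ_psd x).eigenvalues_nonneg i)
      have h3 := trace_eq_sum_eig (hρ_psd x).1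
      rw [hρ_tr x, h2] at h3
      simp at h3
    refine Finset.sum_pos' (fun i _ => ?_) ⟨j, Finset.mem_univ j, ?_⟩
    · split_ifs with h
      · exact le_refl 0
      · exact Real.rpow_nonneg ((hρ_psd x).eigenvalues_nonneg i) α
    · rw [if_neg hj.ne']
      exact Real.rpow_pos_of_pos hj α
  have hS_tr : S.trace = ((∑ x, p x * ∑ i,
      if (hρ_psd x).1.eigenvalues i = 0 then (0:ℝ)
      else (hρ_psd x).1.eigenvalues i ^ α : ℝ) : ℂ) := by
    rw [hSdef, Matrix.trace_sum]
    rw [Finset.sum_congr rfl (fun x _ => by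
      rw [Matrix.trace_smul, mpow_trace (hρ_psd x).1 α, smul_eq_mul,
        ← Complex.ofReal_mul])]
    rw [← Complex.ofReal_sum]
  have hs_pos : (0:ℝ) < ∑ x, p x * ∑ i,
      if (hρ_psd x).1.eigenvalues i = 0 then (0:ℝ)
      else (hρ_psd x).1.eigenvalues i ^ α := by
    obtain ⟨x0, hx0⟩ : ∃ x, 0 < p x := by
      by_contra h
      push_neg at h
      have h2 : ∑ x, p x = 0 :=
        le_antisymm (Finset.sum_nonpos fun i _ => h i)
          (Finset.sum_nonneg fun i _ => hp_nonneg i)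
      rw [hp_sum] at h2
      exact one_ne_zero h2
    exact Finset.sum_pos' (fun x _ => mul_nonneg (hp_nonneg x) (hc_pos x).le)
      ⟨x0, Finset.mem_univ x0, mul_pos hx0 (hc_pos x0)⟩
  have hS_tr_ne : S.trace ≠ 0 := by
    rw [hS_tr]
    exact_mod_cast hs_pos.ne'
  have hζ_psd : ζ.PosSemidef := hζ ▸ mpow_posSemidef hS_psd (1/α)
  set t := ∑ i, (if hS_psd.1.eigenvalues i = 0 then (0:ℝ)
    else hS_psd.1.eigenvalues i ^ (1/α)) with htdef
  have hζ_tr : ζ.trace = (t : ℂ) := by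
    rw [hζ]
    exact mpow_trace hS_psd.1 (1/α)
  have ht_pos : 0 < t := by
    obtain ⟨j, hj⟩ : ∃ j, 0 < hS_psd.1.eigenvalues j := by
      by_contra h
      push_neg at h
      have h2 : ∑ i, hS_psd.1.eigenvalues i = 0 :=
        le_antisymm (Finset.sum_nonpos fun i _ => h i)
          (Finset.sum_nonneg fun i _ => hS_psd.eigenvalues_nonneg i)
      exact hS_tr_ne (by rw [trace_eq_sum_eig hS_psd.1, h2, Complex.ofReal_zero])
    refine Finset.sum_pos' (fun i _ => ?_) ⟨j, Finset.mem_univ j, ?_⟩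
    · split_ifs with h
      · exact le_refl 0
      · exact Real.rpow_nonneg (hS_psd.eigenvalues_nonneg i) (1/α)
    · rw [if_neg hj.ne']
      exact Real.rpow_pos_of_pos hj (1/α)
  obtain ⟨T, hT_pos, hT⟩ := trace_mul_mpow_pos hS_psd hS_tr_ne hσ_pd (1 - α)
  have hμR : μ = (t⁻¹ : ℝ) • ζ := by
    rw [hμ, hζ_tr]
    ext i j
    simp [Complex.real_smul, Complex.ofReal_inv]
  have hμα : mpow μ α = ((t⁻¹ : ℝ) ^ α : ℝ) • S := by
    rw [hμR, mpow_real_smul hζ_psd (inv_pos.mpr ht_pos) α, hζ,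
      mpow_mpow_inv hS_psd hα0.ne']
  have hfinal : ((mpow μ α * mpow σ (1-α)).trace).re = t⁻¹ ^ α * T := by
    rw [hμα, smul_mul_assoc, Matrix.trace_smul, hT, Complex.real_smul,
      ← Complex.ofReal_mul, Complex.ofReal_re]
  rw [hζ_tr, Complex.ofReal_re, hT, Complex.ofReal_re, hfinal,
    Real.logb_mul (Real.rpow_pos_of_pos (inv_pos.mpr ht_pos) α).ne' hT_pos.ne',
    Real.inv_rpow ht_pos.le, Real.logb_inv]
  have hlr : Real.logb 2 (t ^ α) = α * Real.logb 2 t := by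
    rw [Real.logb, Real.logb, Real.log_rpow ht_pos]
    ring
  rw [hlr]
  ring
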